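/- Let p : X → B be a fibration of path-connected spaces with path-connected fiber F = p⁻¹(b), π₂(B) trivial, and suppose p admits a continuous section s : B → X with s(b) = x. Then π₁(X,x) is isomorphic to the semidirect product π₁(B,b) ⋉ π₁(F,x). -/

import Mathlib

open scoped Topology unitInterval
open CategoryTheory

/-- A (Hurewicz) fibration: a continuous map satisfying the homotopy lifting
property with respect to all topological spaces. -/
def IsFibration {X B : Type*} [TopologicalSpace X] [TopologicalSpace B] (p : X → B) : Prop :=
  Continuous p ∧
    ∀ (Y : Type) [TopologicalSpace Y] (H : Y × I → B) (h : Y → X),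
      Continuous H → Continuous h → (∀ y, p (h y) = H (y, 0)) →
        ∃ G : Y × I → X, Continuous G ∧ (∀ y, G (y, 0) = h y) ∧ ∀ q, p (G q) = H q

/-- The homomorphism on fundamental groups induced by a continuous map. -/
noncomputable def indHom {X Y : Type u} [TopologicalSpace X] [TopologicalSpace Y]
    (f : C(X, Y)) (x : X) : FundamentalGroup X x →* FundamentalGroup Y (f x) :=
  Functor.mapEnd (FundamentalGroupoid.mk x)
    (FundamentalGroupoid.fundamentalGroupoidFunctor.map (X := TopCat.of X) (Y := TopCat.of Y) (TopCat.ofHom f))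

open CategoryTheory FundamentalGroupoid
open FundamentalGroupoid (fromTop)
open scoped Topology.Homotopy

attribute [local instance] Path.Homotopic.setoid

theorem Path.Homotopic.map_lift {X Y : Type*} [TopologicalSpace X] [TopologicalSpace Y] {x₀ x₁ : X}
    (P₀ : Path x₀ x₁) (f : C(X, Y)) :
    (⟦P₀.map f.continuous⟧ : Path.Homotopic.Quotient (f x₀) (f x₁)) =
      Path.Homotopic.Quotient.map ⟦P₀⟧ f := rfl

theorem Path.Homotopic.comp_lift {X : Type*} [TopologicalSpace X] {x₀ x₁ x₂ : X}
    (P₀ : Path x₀ x₁) (P₁ : Path x₁ x₂) :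
    (⟦P₀.trans P₁⟧ : Path.Homotopic.Quotient x₀ x₂) =
      Path.Homotopic.Quotient.trans ⟦P₀⟧ ⟦P₁⟧ := rfl

/-- The four edge paths of a square `G : C(I × I, C)`; first coordinate is "time". -/
noncomputable def sqLeft {C : Type} [TopologicalSpace C] (G : C(I × I, C)) :
    Path (G (0,0)) (G (0,1)) :=
  ⟨⟨fun s => G (0, s), by fun_prop⟩, rfl, rfl⟩
noncomputable def sqRight {C : Type} [TopologicalSpace C] (G : C(I × I, C)) :
    Path (G (1,0)) (G (1,1)) :=
  ⟨⟨fun s => G (1, s), by fun_prop⟩, rfl, rfl⟩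
noncomputable def sqBot {C : Type} [TopologicalSpace C] (G : C(I × I, C)) :
    Path (G (0,0)) (G (1,0)) :=
  ⟨⟨fun t => G (t, 0), by fun_prop⟩, rfl, rfl⟩
noncomputable def sqTop {C : Type} [TopologicalSpace C] (G : C(I × I, C)) :
    Path (G (0,1)) (G (1,1)) :=
  ⟨⟨fun t => G (t, 1), by fun_prop⟩, rfl, rfl⟩

/-- The square lemma : left ⬝ top is homotopic rel endpoints to bot ⬝ right. -/
theorem square_homotopic {C : Type} [TopologicalSpace C] (G : C(I × I, C)) :
    ((sqLeft G).trans (sqTop G)).Homotopic ((sqBot G).trans (sqRight G)) := by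
  let f : C(I, C) := ⟨fun s => G (0, s), by fun_prop⟩
  let g : C(I, C) := ⟨fun s => G (1, s), by fun_prop⟩
  let H : ContinuousMap.Homotopy f g :=
    { toContinuousMap := G
      map_zero_left := fun s => rfl
      map_one_left := fun s => rfl }
  have key := @ContinuousMap.Homotopy.eq_diag_path (TopCat.of I) (TopCat.of C) f g H
      (0 : I) (1 : I)
      (⟦unitInterval.path01⟧ : FundamentalGroupoid.fromTop (X := TopCat.of I) (0 : I) ⟶
        FundamentalGroupoid.fromTop (1 : I))
  have h2 := key.1.trans key.2.symm
  have h3 : (⟦(unitInterval.path01.map f.continuous).trans (H.evalAt 1)⟧ :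
      Path.Homotopic.Quotient (f 0) (g 1)) = ⟦(H.evalAt 0).trans (unitInterval.path01.map g.continuous)⟧ := h2
  have h4 := Quotient.exact h3
  -- identify the paths
  have e1 : (unitInterval.path01.map f.continuous) = sqLeft G := by
    ext s; rfl
  have e2 : H.evalAt 1 = sqTop G := by ext t; rfl
  have e3 : H.evalAt 0 = sqBot G := by ext t; rfl
  have e4 : (unitInterval.path01.map g.continuous) = sqRight G := by ext s; rfl
  rwa [e1, e2, e3, e4] at h4
open scoped unitInterval
open CategoryTheory FundamentalGroupoid
open FundamentalGroupoid (fromTop)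

attribute [local instance] Path.Homotopic.setoid

theorem square_homotopic' {C : Type} [TopologicalSpace C] (G : C(I × I, C))
    {v00 v01 v10 v11 : C}
    (l : Path v00 v01) (t : Path v01 v11) (bp : Path v00 v10) (r : Path v10 v11)
    (hl : ∀ s, l s = G (0, s)) (ht : ∀ θ, t θ = G (θ, 1))
    (hb : ∀ θ, bp θ = G (θ, 0)) (hr : ∀ s, r s = G (1, s)) :
    (l.trans t).Homotopic (bp.trans r) := by
  have h00 : v00 = G (0, 0) := l.source.symm.trans (hl 0)
  have h01 : v01 = G (0, 1) := l.target.symm.trans (hl 1)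
  have h10 : v10 = G (1, 0) := bp.target.symm.trans (hb 1)
  have h11 : v11 = G (1, 1) := t.target.symm.trans (ht 1)
  subst h00 h01 h10 h11
  have el : l = sqLeft G := by ext s; exact hl s
  have et : t = sqTop G := by ext θ; exact ht θ
  have eb : bp = sqBot G := by ext θ; exact hb θ
  have er : r = sqRight G := by ext s; exact hr s
  rw [el, et, eb, er]
  exact square_homotopic G

theorem square_comp {C : Type} [TopologicalSpace C] (G : C(I × I, C))
    {v00 v01 v10 v11 : C}
    (l : Path v00 v01) (t : Path v01 v11) (bp : Path v00 v10) (r : Path v10 v11)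
    (hl : ∀ s, l s = G (0, s)) (ht : ∀ θ, t θ = G (θ, 1))
    (hb : ∀ θ, bp θ = G (θ, 0)) (hr : ∀ s, r s = G (1, s)) :
    Path.Homotopic.Quotient.trans (⟦l⟧ : Path.Homotopic.Quotient v00 v01) ⟦t⟧ =
      Path.Homotopic.Quotient.trans (⟦bp⟧ : Path.Homotopic.Quotient v00 v10) ⟦r⟧ := by
  rw [← Path.Homotopic.comp_lift, ← Path.Homotopic.comp_lift]
  exact Quotient.sound (square_homotopic' G l t bp r hl ht hb hr)

theorem comp_symm_eq_refl {C : Type} [TopologicalSpace C] {c d : C} (q : Path c d) :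
    Path.Homotopic.Quotient.trans (⟦q⟧ : Path.Homotopic.Quotient c d) ⟦q.symm⟧ = ⟦Path.refl c⟧ := by
  rw [← Path.Homotopic.comp_lift]
  exact Quotient.sound ⟨(Path.Homotopy.reflTransSymm q).symm⟩

theorem symm_comp_eq_refl {C : Type} [TopologicalSpace C] {c d : C} (q : Path c d) :
    Path.Homotopic.Quotient.trans (⟦q.symm⟧ : Path.Homotopic.Quotient d c) ⟦q⟧ = ⟦Path.refl d⟧ := by
  rw [← Path.Homotopic.comp_lift]
  exact Quotient.sound ⟨(Path.Homotopy.reflSymmTrans q).symm⟩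
theorem IsFibration.lift_square {X B : Type} [TopologicalSpace X] [TopologicalSpace B]
    {p : X → B} (hp : IsFibration p) (H : C(I × I, B)) (h : C(I, X))
    (h0 : ∀ s, p (h s) = H (0, s)) :
    ∃ G : C(I × I, X), (∀ s, G (0, s) = h s) ∧ ∀ q, p (G q) = H q := by
  obtain ⟨G, Gc, G0, Gp⟩ := hp.2 I (fun q => H (q.2, q.1)) h (by fun_prop) h.continuous
    (fun y => h0 y)
  exact ⟨⟨fun q => G (q.2, q.1), by fun_prop⟩, fun s => G0 s, fun q => Gp (q.2, q.1)⟩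

/-- A loop whose image is null-homotopic lifts (up to homotopy) into the fiber. -/
theorem ker_loop_lift {X B : Type} [TopologicalSpace X] [TopologicalSpace B]
    {p : X → B} (hp : IsFibration p) {b : B} {x : X} (hx : p x = b)
    (γ : Path x x) (hγ : (γ.map hp.1).Homotopic (Path.refl (p x))) :
    ∃ δ : Path (⟨x, hx⟩ : p ⁻¹' {b}) ⟨x, hx⟩,
      (⟦γ⟧ : Path.Homotopic.Quotient x x) = ⟦δ.map continuous_subtype_val⟧ := by
  obtain ⟨H⟩ := hγ
  obtain ⟨G, G0, Gp⟩ := hp.lift_square ⟨fun q => H q, H.continuous⟩ γ.toContinuousMap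
    (fun s => (H.apply_zero s).symm)
  have mem0 : (0 : I) ∈ ({0, 1} : Set I) := Set.mem_insert 0 _
  have mem1 : (1 : I) ∈ ({0, 1} : Set I) := Set.mem_insert_of_mem 0 rfl
  have hb0 : ∀ t, p (G (t, 0)) ∈ ({b} : Set B) := fun t => by
    have h1 := (Gp (t, 0)).trans (H.eq_fst t mem0)
    simp only [Path.coe_toContinuousMap, Path.map_coe, Function.comp_apply, Path.source] at h1
    simp [h1, hx]
  have hb1 : ∀ t, p (G (t, 1)) ∈ ({b} : Set B) := fun t => by
    have h1 := (Gp (t, 1)).trans (H.eq_fst t mem1)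
    simp only [Path.coe_toContinuousMap, Path.map_coe, Function.comp_apply, Path.target] at h1
    simp [h1, hx]
  have hbr : ∀ s, p (G (1, s)) ∈ ({b} : Set B) := fun s => by
    have h1 := (Gp (1, s)).trans (H.apply_one s)
    simp only [Path.coe_toContinuousMap, Path.refl_apply] at h1
    simp [h1, hx]
  let u : Path (⟨x, hx⟩ : p ⁻¹' {b}) ⟨G (1, 0), hb0 1⟩ :=
    ⟨⟨fun t => ⟨G (t, 0), hb0 t⟩, by fun_prop⟩,
      Subtype.ext ((G0 0).trans γ.source), rfl⟩
  let w : Path (⟨G (1, 0), hb0 1⟩ : p ⁻¹' {b}) ⟨G (1, 1), hb1 1⟩ :=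
    ⟨⟨fun s => ⟨G (1, s), hbr s⟩, by fun_prop⟩, rfl, rfl⟩
  let v : Path (⟨x, hx⟩ : p ⁻¹' {b}) ⟨G (1, 1), hb1 1⟩ :=
    ⟨⟨fun t => ⟨G (t, 1), hb1 t⟩, by fun_prop⟩,
      Subtype.ext ((G0 1).trans γ.target), rfl⟩
  refine ⟨u.trans (w.trans v.symm), ?_⟩
  let Γ : fromTop (X := TopCat.of X) x ⟶ fromTop x := ⟦γ⟧
  let U : fromTop (X := TopCat.of X) x ⟶ fromTop (G (1, 0)) := ⟦u.map continuous_subtype_val⟧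
  let W : fromTop (X := TopCat.of X) (G (1, 0)) ⟶ fromTop (G (1, 1)) :=
    ⟦w.map continuous_subtype_val⟧
  let V : fromTop (X := TopCat.of X) x ⟶ fromTop (G (1, 1)) := ⟦v.map continuous_subtype_val⟧
  let V' : fromTop (X := TopCat.of X) (G (1, 1)) ⟶ fromTop x :=
    ⟦(v.map continuous_subtype_val).symm⟧
  have sqc : Γ ≫ V = U ≫ W :=
    square_comp G γ (v.map continuous_subtype_val) (u.map continuous_subtype_val)
      (w.map continuous_subtype_val)
      (fun s => (G0 s).symm) (fun θ => rfl) (fun θ => rfl) (fun s => rfl)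
  have hv : V ≫ V' = 𝟙 (fromTop (X := TopCat.of X) x) :=
    comp_symm_eq_refl (v.map continuous_subtype_val)
  have key : Γ = U ≫ (W ≫ V') := by
    calc Γ = Γ ≫ 𝟙 _ := (Category.comp_id _).symm
    _ = Γ ≫ (V ≫ V') := by rw [hv]
    _ = (Γ ≫ V) ≫ V' := (Category.assoc _ _ _).symm
    _ = (U ≫ W) ≫ V' := by rw [sqc]
    _ = U ≫ (W ≫ V') := Category.assoc _ _ _
  show Γ = ⟦(u.trans (w.trans v.symm)).map continuous_subtype_val⟧
  rw [Path.map_trans, Path.map_trans, ← Path.map_symm]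
  rw [show (⟦(u.map continuous_subtype_val).trans
      (((w.map continuous_subtype_val)).trans ((v.map continuous_subtype_val)).symm)⟧ :
      Path.Homotopic.Quotient x x) = U ≫ (W ≫ V') by
    rfl]
  exact key
open scoped Topology.Homotopy

/-- A loop in the fiber which dies in the total space is trivial in the fiber
(uses `π₂` of the base trivial). -/
theorem fiber_loop_trivial {X B : Type} [TopologicalSpace X] [TopologicalSpace B]
    {p : X → B} (hp : IsFibration p) {b : B} {x : X} (hx : p x = b)
    (hπ2 : Subsingleton (π_ 2 B b))
    (δ : Path (⟨x, hx⟩ : p ⁻¹' {b}) ⟨x, hx⟩)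
    (hδ : (δ.map continuous_subtype_val).Homotopic (Path.refl x)) :
    (⟦δ⟧ : Path.Homotopic.Quotient (⟨x, hx⟩ : p ⁻¹' {b}) ⟨x, hx⟩) = ⟦Path.refl (⟨x, hx⟩ : p ⁻¹' {b})⟧ := by
  obtain ⟨H⟩ := hδ
  have mem0 : (0 : I) ∈ ({0, 1} : Set I) := Set.mem_insert 0 _
  have mem1 : (1 : I) ∈ ({0, 1} : Set I) := Set.mem_insert_of_mem 0 rfl
  have hH0 : ∀ s, H (0, s) = (δ s : X) := fun s => H.apply_zero s
  have hH1 : ∀ s, H (1, s) = x := fun s => H.apply_one s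
  have hHt0 : ∀ t, H (t, 0) = x := fun t => by
    have := H.eq_fst t mem0
    simpa [Path.map_coe] using this
  have hHt1 : ∀ t, H (t, 1) = x := fun t => by
    have := H.eq_fst t mem1
    simpa [Path.map_coe] using this
  -- the image of H in B has constant boundary value b
  have hHb : ∀ q : I × I, q.1 = 0 ∨ q.1 = 1 ∨ q.2 = 0 ∨ q.2 = 1 → p (H q) = b := by
    rintro ⟨t, s⟩ (h | h | h | h) <;> subst h
    · rw [hH0]; exact (δ s).2
    · rw [hH1]; exact hx
    · rw [hHt0]; exact hx
    · rw [hHt1]; exact hx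
  -- package p ∘ H ∘ e as a generalized 2-loop
  let e : (Fin 2 → I) ≃ₜ I × I := Homeomorph.piFinTwo fun _ => I
  have he0 : ∀ q : I × I, (e.symm q) 0 = q.1 := fun q => by
    simp [e, Homeomorph.piFinTwo, piFinTwoEquiv]
  have he1 : ∀ q : I × I, (e.symm q) 1 = q.2 := fun q => by
    simp [e, Homeomorph.piFinTwo, piFinTwoEquiv]
  have hbdry : ∀ q : I × I, q.1 = 0 ∨ q.1 = 1 ∨ q.2 = 0 ∨ q.2 = 1 →
      e.symm q ∈ Cube.boundary (Fin 2) := by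
    rintro q (h | h | h | h)
    · exact ⟨0, Or.inl (by rw [he0, h])⟩
    · exact ⟨0, Or.inr (by rw [he0, h])⟩
    · exact ⟨1, Or.inl (by rw [he1, h])⟩
    · exact ⟨1, Or.inr (by rw [he1, h])⟩
  have heapp : ∀ y : Fin 2 → I, e y = (y 0, y 1) := fun y => rfl
  let gmap : C((Fin 2 → I), B) :=
    ⟨fun y => p (H (e y)), hp.1.comp (H.continuous.comp e.continuous)⟩
  have hgmem : gmap ∈ GenLoop (Fin 2) B b := by
    rintro y ⟨i, hi⟩
    show p (H (e y)) = b
    apply hHb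
    fin_cases i
    · rcases hi with h | h
      · left; rw [heapp]; exact h
      · right; left; rw [heapp]; exact h
    · rcases hi with h | h
      · right; right; left; rw [heapp]; exact h
      · right; right; right; rw [heapp]; exact h
  let g : Ω^ (Fin 2) B b := ⟨gmap, hgmem⟩
  -- π₂ triviality gives a homotopy rel boundary from g to the constant loop
  have hgq : (⟦g⟧ : π_ 2 B b) = ⟦GenLoop.const⟧ := @Subsingleton.elim (π_ 2 B b) hπ2 _ _
  obtain ⟨K⟩ : GenLoop.Homotopic g GenLoop.const := Quotient.exact hgq
  -- lift the homotopy K through the fibration, with initial condition H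
  obtain ⟨G, Gc, G0, Gp⟩ := hp.2 (I × I) (fun q => K (q.2, e.symm q.1)) (fun q => H q)
    (by fun_prop) H.continuous
    (fun q => by
      show p (H q) = K (0, e.symm q)
      rw [K.apply_zero]
      show p (H q) = p (H (e (e.symm q)))
      rw [e.apply_symm_apply])
  have memSide : ∀ q : I × I, (q.1 = 0 ∨ q.1 = 1 ∨ q.2 = 0 ∨ q.2 = 1) →
      ∀ r, p (G (q, r)) ∈ ({b} : Set B) := fun q hq r => by
    have h1 : p (G (q, r)) = K (r, e.symm q) := Gp (q, r)
    rw [h1, K.eq_fst r (hbdry q hq)]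
    exact hgmem _ (hbdry q hq)
  have memTop : ∀ q : I × I, p (G (q, 1)) ∈ ({b} : Set B) := fun q => by
    have h1 : p (G (q, 1)) = K (1, e.symm q) := Gp (q, 1)
    rw [h1, K.apply_one]
    exact GenLoop.const_apply
  -- corner points on the top face
  let x₀ : p ⁻¹' {b} := ⟨x, hx⟩
  let P00 : p ⁻¹' {b} := ⟨G ((0, 0), 1), memTop (0, 0)⟩
  let P01 : p ⁻¹' {b} := ⟨G ((0, 1), 1), memTop (0, 1)⟩
  let P10 : p ⁻¹' {b} := ⟨G ((1, 0), 1), memTop (1, 0)⟩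
  let P11 : p ⁻¹' {b} := ⟨G ((1, 1), 1), memTop (1, 1)⟩
  -- vertical paths over the four corners
  let a0 : Path x₀ P00 := ⟨⟨fun r => ⟨G ((0, 0), r), memSide (0, 0) (Or.inl rfl) r⟩,
      (Gc.comp (by fun_prop)).subtype_mk _⟩,
    Subtype.ext (by show G ((0, 0), 0) = x; rw [G0 (0, 0)]; exact hHt0 0), rfl⟩
  let a1 : Path x₀ P01 := ⟨⟨fun r => ⟨G ((0, 1), r), memSide (0, 1) (Or.inl rfl) r⟩,
      (Gc.comp (by fun_prop)).subtype_mk _⟩,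
    Subtype.ext (by show G ((0, 1), 0) = x; rw [G0 (0, 1)]; exact hHt1 0), rfl⟩
  let c0 : Path x₀ P10 := ⟨⟨fun r => ⟨G ((1, 0), r), memSide (1, 0) (Or.inr (Or.inl rfl)) r⟩,
      (Gc.comp (by fun_prop)).subtype_mk _⟩,
    Subtype.ext (by show G ((1, 0), 0) = x; rw [G0 (1, 0)]; exact hHt0 1), rfl⟩
  let c1 : Path x₀ P11 := ⟨⟨fun r => ⟨G ((1, 1), r), memSide (1, 1) (Or.inr (Or.inl rfl)) r⟩,
      (Gc.comp (by fun_prop)).subtype_mk _⟩,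
    Subtype.ext (by show G ((1, 1), 0) = x; rw [G0 (1, 1)]; exact hHt1 1), rfl⟩
  -- edge paths of the top face
  let lT : Path P00 P01 := ⟨⟨fun s => ⟨G ((0, s), 1), memTop (0, s)⟩,
      (Gc.comp (by fun_prop)).subtype_mk _⟩, rfl, rfl⟩
  let bT : Path P00 P10 := ⟨⟨fun θ => ⟨G ((θ, 0), 1), memTop (θ, 0)⟩,
      (Gc.comp (by fun_prop)).subtype_mk _⟩, rfl, rfl⟩
  let tT : Path P01 P11 := ⟨⟨fun θ => ⟨G ((θ, 1), 1), memTop (θ, 1)⟩,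
      (Gc.comp (by fun_prop)).subtype_mk _⟩, rfl, rfl⟩
  let rT : Path P10 P11 := ⟨⟨fun s => ⟨G ((1, s), 1), memTop (1, s)⟩,
      (Gc.comp (by fun_prop)).subtype_mk _⟩, rfl, rfl⟩
  -- the five squares in the fiber
  let SM : C(I × I, ↥(p ⁻¹' {b})) := ⟨fun z => ⟨G ((0, z.2), z.1),
      memSide (0, z.2) (Or.inl rfl) z.1⟩, (Gc.comp (by fun_prop)).subtype_mk _⟩
  let SN : C(I × I, ↥(p ⁻¹' {b})) := ⟨fun z => ⟨G ((z.2, 0), z.1),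
      memSide (z.2, 0) (Or.inr (Or.inr (Or.inl rfl))) z.1⟩, (Gc.comp (by fun_prop)).subtype_mk _⟩
  let SP : C(I × I, ↥(p ⁻¹' {b})) := ⟨fun z => ⟨G ((z.2, 1), z.1),
      memSide (z.2, 1) (Or.inr (Or.inr (Or.inr rfl))) z.1⟩, (Gc.comp (by fun_prop)).subtype_mk _⟩
  let SR : C(I × I, ↥(p ⁻¹' {b})) := ⟨fun z => ⟨G ((1, z.2), z.1),
      memSide (1, z.2) (Or.inr (Or.inl rfl)) z.1⟩, (Gc.comp (by fun_prop)).subtype_mk _⟩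
  let ST : C(I × I, ↥(p ⁻¹' {b})) := ⟨fun z => ⟨G ((z.1, z.2), 1), memTop (z.1, z.2)⟩,
      (Gc.comp (by fun_prop)).subtype_mk _⟩
  -- homs in the fundamental groupoid of the fiber
  let FF := ↥(p ⁻¹' {b})
  let D : fromTop (X := TopCat.of FF) x₀ ⟶ fromTop x₀ := ⟦δ⟧
  let R : fromTop (X := TopCat.of FF) x₀ ⟶ fromTop x₀ := ⟦Path.refl x₀⟧
  let A0 : fromTop (X := TopCat.of FF) x₀ ⟶ fromTop P00 := ⟦a0⟧
  let A1 : fromTop (X := TopCat.of FF) x₀ ⟶ fromTop P01 := ⟦a1⟧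
  let C0 : fromTop (X := TopCat.of FF) x₀ ⟶ fromTop P10 := ⟦c0⟧
  let C1 : fromTop (X := TopCat.of FF) x₀ ⟶ fromTop P11 := ⟦c1⟧
  let LT : fromTop (X := TopCat.of FF) P00 ⟶ fromTop P01 := ⟦lT⟧
  let BT : fromTop (X := TopCat.of FF) P00 ⟶ fromTop P10 := ⟦bT⟧
  let TT : fromTop (X := TopCat.of FF) P01 ⟶ fromTop P11 := ⟦tT⟧
  let RT : fromTop (X := TopCat.of FF) P10 ⟶ fromTop P11 := ⟦rT⟧
  have sqc1 : D ≫ A1 = A0 ≫ LT :=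
    square_comp SM δ a1 a0 lT
      (fun s => Subtype.ext (by show (δ s : X) = G ((0, s), 0); rw [G0 (0, s)]; exact (hH0 s).symm))
      (fun θ => rfl) (fun θ => rfl) (fun s => rfl)
  have sqc2 : R ≫ C0 = A0 ≫ BT :=
    square_comp SN (Path.refl x₀) c0 a0 bT
      (fun t => Subtype.ext (by show x = G ((t, 0), 0); rw [G0 (t, 0)]; exact (hHt0 t).symm))
      (fun θ => rfl) (fun θ => rfl) (fun t => rfl)
  have sqc3 : R ≫ C1 = A1 ≫ TT :=
    square_comp SP (Path.refl x₀) c1 a1 tT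
      (fun t => Subtype.ext (by show x = G ((t, 1), 0); rw [G0 (t, 1)]; exact (hHt1 t).symm))
      (fun θ => rfl) (fun θ => rfl) (fun t => rfl)
  have sqc4 : R ≫ C1 = C0 ≫ RT :=
    square_comp SR (Path.refl x₀) c1 c0 rT
      (fun s => Subtype.ext (by show x = G ((1, s), 0); rw [G0 (1, s)]; exact (hH1 s).symm))
      (fun θ => rfl) (fun θ => rfl) (fun s => rfl)
  have sqc5 : LT ≫ TT = BT ≫ RT :=
    square_comp ST lT tT bT rT (fun s => rfl) (fun θ => rfl) (fun θ => rfl) (fun s => rfl)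
  have hR : R = 𝟙 (fromTop (X := TopCat.of FF) x₀) :=
    (FundamentalGroupoid.id_eq_path_refl (FundamentalGroupoid.mk x₀)).symm
  have hA1TT : A1 ≫ TT = C1 := by rw [← sqc3, hR, Category.id_comp]
  have hC0RT : C0 ≫ RT = C1 := by rw [← sqc4, hR, Category.id_comp]
  have hDC1 : D ≫ C1 = C1 := by
    calc D ≫ C1 = D ≫ (A1 ≫ TT) := by rw [hA1TT]
    _ = (D ≫ A1) ≫ TT := (Category.assoc _ _ _).symm
    _ = (A0 ≫ LT) ≫ TT := by rw [sqc1]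
    _ = A0 ≫ (LT ≫ TT) := Category.assoc _ _ _
    _ = A0 ≫ (BT ≫ RT) := by rw [sqc5]
    _ = (A0 ≫ BT) ≫ RT := (Category.assoc _ _ _).symm
    _ = (R ≫ C0) ≫ RT := by rw [sqc2]
    _ = C0 ≫ RT := by rw [hR, Category.id_comp]
    _ = C1 := hC0RT
  have hD : D = 𝟙 (fromTop (X := TopCat.of FF) x₀) := by
    have h7 : D ≫ C1 = 𝟙 _ ≫ C1 := by rw [Category.id_comp]; exact hDC1
    exact (cancel_mono C1).mp h7
  exact hD.trans (FundamentalGroupoid.id_eq_path_refl (FundamentalGroupoid.mk x₀))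
section Glue

open FundamentalGroupoid

variable {A C : Type} [TopologicalSpace A] [TopologicalSpace C]

/-- `indHom` with the image basepoint adjusted along an equation. -/
noncomputable def indHom2 (f : C(A, C)) {a : A} {c : C} (h : f a = c) :
    FundamentalGroup A a →* FundamentalGroup C c :=
  (eqToIso (FundamentalGroupoid.ext h)).conj.toMonoidHom.comp (indHom f a)

theorem indHom2_hom (f : C(A, C)) {a : A} {c : C} (h : f a = c) (g : FundamentalGroup A a) :
    (indHom2 f h g) =
      eqToHom (FundamentalGroupoid.ext h).symm ≫
        (Path.Homotopic.Quotient.map g f : FundamentalGroupoid.mk (f a) ⟶ FundamentalGroupoid.mk (f a)) ≫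
        eqToHom (FundamentalGroupoid.ext h) := rfl

theorem one_hom (c : C) : (1 : FundamentalGroup C c) = 𝟙 (FundamentalGroupoid.mk c) := rfl

end Glue

section Glue2

open FundamentalGroupoid

attribute [local instance] Path.Homotopic.setoid

variable {A C E : Type} [TopologicalSpace A] [TopologicalSpace C] [TopologicalSpace E]

theorem indHom2_comp (f : C(A, C)) (f' : C(C, E)) {a : A} {c : C} {e : E}
    (h : f a = c) (h' : f' c = e) (h'' : (f'.comp f) a = e) :
    (indHom2 f' h').comp (indHom2 f h) = indHom2 (f'.comp f) h'' := by
  subst h; subst h'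
  ext g
  show (indHom2 f' rfl (indHom2 f rfl g)) = (indHom2 (f'.comp f) h'' g)
  rw [indHom2_hom, indHom2_hom, indHom2_hom]
  simp only [eqToHom_refl, Category.comp_id, Category.id_comp]
  induction g using Quotient.inductionOn with
  | h γ =>
    rw [← Path.Homotopic.map_lift]
    have key := ContinuousMap.Homotopy.eq_path_of_eq_image
      (X₁ := TopCat.of C) (X₂ := TopCat.of A) (Y := TopCat.of E)
      (f := f') (g := f'.comp f) (p := γ.map f.continuous) (q := γ)
      (fun t => rfl)
    refine key.trans ?_
    simp only [ContinuousMap.Homotopy.hcast_def, eqToHom_refl]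
    exact (Category.id_comp _).trans (Category.comp_id _)

theorem indHom2_eq_id (f : C(C, C)) (hf : ∀ y, f y = y) {c : C} (h : f c = c) :
    indHom2 f h = MonoidHom.id (FundamentalGroup C c) := by
  ext g
  show (indHom2 f h g) = g
  rw [indHom2_hom]
  induction g using Quotient.inductionOn with
  | h γ =>
    have key := ContinuousMap.Homotopy.eq_path_of_eq_image
      (X₁ := TopCat.of C) (X₂ := TopCat.of C) (Y := TopCat.of C)
      (f := f) (g := ContinuousMap.id C) (p := γ) (q := γ) (fun t => hf (γ t))
    rw [← Path.Homotopic.map_lift]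
    have e : γ.map f.continuous = γ.cast h h := by ext t; exact hf (γ t)
    rw [e]
    clear e
    generalize f c = d at h ⊢
    subst h
    simp

theorem indHom2_eq_one (f : C(A, C)) {a : A} {c : C} (h : f a = c)
    (hconst : ∀ y, f y = c) : indHom2 f h = 1 := by
  have hf : f = ContinuousMap.const A c := ContinuousMap.ext hconst
  subst hf
  ext g
  show (indHom2 (ContinuousMap.const A c) h g) = 𝟙 _
  rw [indHom2_hom]
  induction g using Quotient.inductionOn with
  | h γ =>
    rw [← Path.Homotopic.map_lift]
    have hcp : γ.map (ContinuousMap.const A c).continuous =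
        Path.refl ((ContinuousMap.const A c) a) := by
      ext t; rfl
    rw [hcp]
    show eqToHom (FundamentalGroupoid.ext h).symm ≫
        𝟙 (FundamentalGroupoid.mk ((ContinuousMap.const A c) a)) ≫
        eqToHom (FundamentalGroupoid.ext h) = 𝟙 (FundamentalGroupoid.mk c)
    simp [eqToHom_trans]
    exact eqToHom_refl _ _

end Glue2

theorem splitting_semidirect {G Q N : Type*} [Group G] [Group Q] [Group N]
    (prj : G →* Q) (sec : Q →* G) (hsec : ∀ q, prj (sec q) = q)
    (ι : N →* G) (hinj : Function.Injective ι) (hker : ι.range = prj.ker) :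
    ∃ φ : Q →* MulAut N, Nonempty (G ≃* N ⋊[φ] Q) := by
  let e : N ≃* prj.ker := (MonoidHom.ofInjective hinj).trans (MulEquiv.subgroupCongr hker)
  have he : ∀ n : N, (e n : G) = ι n := fun n => rfl
  have he' : ∀ m : prj.ker, ι (e.symm m) = (m : G) := by
    intro m; rw [← he, e.apply_symm_apply]
  let φ : Q →* MulAut N :=
    ((MulAut.congr e).symm.toMonoidHom.comp MulAut.conjNormal).comp sec
  have hφ : ∀ q n, ι (φ q n) = sec q * ι n * (sec q)⁻¹ := by
    intro q n
    show ι (e.symm (MulAut.conjNormal (sec q) (e n))) = _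
    rw [he']
    rw [MulAut.conjNormal_apply, he]
  refine ⟨φ, ⟨?_⟩⟩
  have hcomm : ∀ q, ι.comp (φ q).toMonoidHom = (MulAut.conj (sec q)).toMonoidHom.comp ι := by
    intro q; ext n; simp [hφ, MulAut.conj_apply]
  let f : N ⋊[φ] Q →* G := SemidirectProduct.lift ι sec hcomm
  have hf : ∀ a : N ⋊[φ] Q, f a = ι a.1 * sec a.2 := fun _ => rfl
  have hbij : Function.Bijective f := by
    constructor
    · intro a b hab
      rw [hf, hf] at hab
      have hka : prj (ι a.1) = 1 := MonoidHom.mem_ker.mp (hker ▸ (⟨a.1, rfl⟩ : ι a.1 ∈ ι.range))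
      have hkb : prj (ι b.1) = 1 := MonoidHom.mem_ker.mp (hker ▸ (⟨b.1, rfl⟩ : ι b.1 ∈ ι.range))
      have h2 : a.2 = b.2 := by
        have := congrArg prj hab
        simpa [hsec, hka, hkb] using this
      have h1 : a.1 = b.1 := by
        apply hinj
        have := hab
        rw [h2] at this
        exact mul_right_cancel this
      exact SemidirectProduct.ext h1 h2
    · intro g
      have hmem : g * (sec (prj g))⁻¹ ∈ prj.ker := by
        simp [MonoidHom.mem_ker, hsec]
      obtain ⟨n, hn⟩ : g * (sec (prj g))⁻¹ ∈ ι.range := hker ▸ hmem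
      exact ⟨⟨n, prj g⟩, by rw [hf]; simp [hn]⟩
  exact (MulEquiv.ofBijective f hbij).symm
attribute [local instance] Path.Homotopic.setoid in
open FundamentalGroupoid in
theorem fibration_with_section_semidirect {X B : Type} [TopologicalSpace X] [TopologicalSpace B]
    [PathConnectedSpace X] [PathConnectedSpace B]
    (p : X → B) (hp : IsFibration p) (b : B)
    (hF : IsPathConnected (p ⁻¹' {b}))
    (hπ2 : Subsingleton (π_ 2 B b))
    (x : X) (hx : p x = b)
    (s : B → X) (hs : Continuous s) (hps : ∀ y, p (s y) = y) (hsb : s b = x) :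
    ∃ φ : FundamentalGroup B b →*
        MulAut (FundamentalGroup (↥(p ⁻¹' {b})) (⟨x, hx⟩ : p ⁻¹' {b})),
      Nonempty (FundamentalGroup X x ≃*
        (FundamentalGroup (↥(p ⁻¹' {b})) (⟨x, hx⟩ : p ⁻¹' {b})) ⋊[φ] FundamentalGroup B b) := by
  classical
  let x₀ : p ⁻¹' {b} := ⟨x, hx⟩
  let pc : C(X, B) := ⟨p, hp.1⟩
  let sc : C(B, X) := ⟨s, hs⟩
  let ic : C(↥(p ⁻¹' {b}), X) := ⟨Subtype.val, continuous_subtype_val⟩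
  have hpc : pc x = b := hx
  have hsc : sc b = x := hsb
  have hic : ic x₀ = x := rfl
  let pStar : FundamentalGroup X x →* FundamentalGroup B b := indHom2 pc hpc
  let sStar : FundamentalGroup B b →* FundamentalGroup X x := indHom2 sc hsc
  let iStar : FundamentalGroup (↥(p ⁻¹' {b})) x₀ →* FundamentalGroup X x := indHom2 ic hic
  -- section property
  have hcs : (pc.comp sc) b = b := hps b
  have hσ : ∀ g, pStar (sStar g) = g := by
    have hcmp := indHom2_comp sc pc hsc hpc hcs
    have hid := indHom2_eq_id (pc.comp sc) (fun y => hps y) hcs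
    intro g
    exact DFunLike.congr_fun (hcmp.trans hid) g
  -- p ∘ i is constant
  have hci : (pc.comp ic) x₀ = b := hx
  have hki : ∀ g, pStar (iStar g) = 1 := by
    have hcmp := indHom2_comp ic pc hic hpc hci
    have hone := indHom2_eq_one (pc.comp ic) hci
      (fun y => Set.mem_singleton_iff.mp y.2)
    intro g
    exact DFunLike.congr_fun (hcmp.trans hone) g
  -- injectivity of iStar
  have hinj : Function.Injective iStar := by
    rw [injective_iff_map_eq_one]
    intro g hg
    obtain ⟨δ, hrep⟩ := Quotient.exists_rep (g : Path.Homotopic.Quotient x₀ x₀)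
    have hg' : (indHom2 ic hic g) = 𝟙 (FundamentalGroupoid.mk x) := by rw [hg]; rfl
    rw [indHom2_hom, ← hrep] at hg'
    rw [← Path.Homotopic.map_lift] at hg'
    simp only [eqToHom_refl, Category.comp_id, Category.id_comp] at hg'
    rw [FundamentalGroupoid.id_eq_path_refl] at hg'
    have h2 : (δ.map ic.continuous).Homotopic (Path.refl x) :=
      ⟨(Path.Homotopy.transRefl _).symm.trans (Nonempty.some (Quotient.exact hg'))⟩
    have h4 := fiber_loop_trivial hp hx hπ2 δ h2
    show g = (1 : FundamentalGroup (↥(p ⁻¹' {b})) x₀)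
    rw [← hrep]
    exact h4
  -- range iStar = ker pStar
  have hker : iStar.range = pStar.ker := by
    apply le_antisymm
    · rintro _ ⟨g, rfl⟩
      exact MonoidHom.mem_ker.mpr (hki g)
    · intro g hg
      have hg1 : pStar g = 1 := MonoidHom.mem_ker.mp hg
      obtain ⟨γ, hrep⟩ := Quotient.exists_rep (g : Path.Homotopic.Quotient x x)
      have hg' : (indHom2 pc hpc g) = 𝟙 (FundamentalGroupoid.mk b) := by rw [hg1]; rfl
      rw [indHom2_hom, ← hrep] at hg'
      rw [← Path.Homotopic.map_lift] at hg'
      have hg'' := congrArg (fun z => eqToHom (FundamentalGroupoid.ext hpc) ≫ z ≫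
        eqToHom (FundamentalGroupoid.ext hpc).symm) hg'
      simp only [Category.assoc, eqToHom_trans, eqToHom_refl, Category.comp_id,
        Category.id_comp, eqToHom_trans_assoc] at hg''
      erw [Category.assoc, eqToHom_trans, eqToHom_refl, Category.comp_id] at hg''
      rw [FundamentalGroupoid.id_eq_path_refl] at hg''
      have h2 : (γ.map hp.1).Homotopic (Path.refl (p x)) := Quotient.exact hg''
      obtain ⟨δ, hδ⟩ := ker_loop_lift hp hx γ h2
      refine ⟨FundamentalGroup.fromPath (X := TopCat.of ↥(p ⁻¹' {b})) ⟦δ⟧, ?_⟩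
      show (indHom2 ic hic _) = g
      rw [indHom2_hom]
      have hfp : (FundamentalGroup.fromPath (X := TopCat.of ↥(p ⁻¹' {b}))
          (⟦δ⟧ : Path.Homotopic.Quotient x₀ x₀)) = ⟦δ⟧ := rfl
      rw [hfp]
      rw [← Path.Homotopic.map_lift]
      simp only [eqToHom_refl, Category.comp_id, Category.id_comp]
      rw [← hrep]
      exact (Category.comp_id _).trans hδ.symm
  obtain ⟨φ, ⟨eiso⟩⟩ := splitting_semidirect pStar sStar hσ iStar hinj hker
  exact ⟨φ, ⟨eiso⟩⟩
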